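/- arXiv:2406.02796 — 2 statements merged into one kernel-verified Lean document; each statement's English description precedes it below -/
import Mathlib

section
/- For every z ∈ ℂ with |z| < 1, one has 1 + z ≠ 0 and |(1 + z)⁻¹ − e^{−z}| ≤ |z|²/(1 − |z|). -/
open Nat in

/-- For `|z| < 1`, `1 + z ≠ 0` and `|(1 + z)⁻¹ − e^{−z}| ≤ |z|² / (1 − |z|)`. -/
theorem inv_sub_exp_bound (z : ℂ) (hz : ‖z‖ < 1) :
    1 + z ≠ 0 ∧
    ‖(1 + z)⁻¹ - Complex.exp (-z)‖ ≤ ‖z‖ ^ 2 / (1 - ‖z‖) := by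
  have hne : 1 + z ≠ 0 := by
    intro h
    have hz1 : z = -1 := by linear_combination h
    rw [hz1] at hz
    simp at hz
  refine ⟨hne, ?_⟩
  have hnorm : ‖-z‖ < 1 := by simpa using hz
  have hgeo : HasSum (fun n : ℕ => (-z) ^ n) (1 + z)⁻¹ := by
    have := hasSum_geometric_of_norm_lt_one hnorm
    simpa [sub_neg_eq_add] using this
  have hexp : HasSum (fun n : ℕ => (-z) ^ n / (n ! : ℂ)) (Complex.exp (-z)) := by
    have h1 : Complex.exp (-z) = ∑' n : ℕ, (-z) ^ n / (n ! : ℂ) := by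
      rw [Complex.exp_eq_exp_ℂ, NormedSpace.exp_eq_tsum_div]
    rw [h1]
    exact (NormedSpace.expSeries_div_summable (-z)).hasSum
  have hsum : HasSum (fun n : ℕ => (-z) ^ n - (-z) ^ n / (n ! : ℂ))
      ((1 + z)⁻¹ - Complex.exp (-z)) := hgeo.sub hexp
  set f : ℕ → ℂ := fun n => (-z) ^ n - (-z) ^ n / (n ! : ℂ) with hf
  have hf0 : f 0 = 0 := by simp [hf]
  have hf1 : f 1 = 0 := by simp [hf]
  have hSf : Summable f := hsum.summable
  have hS1 : Summable (fun n => f (n + 1)) := (summable_nat_add_iff 1).2 hSf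
  have htsum : (1 + z)⁻¹ - Complex.exp (-z) = ∑' n, f (n + 2) := by
    rw [← hsum.tsum_eq, Summable.tsum_eq_zero_add hSf, hf0, zero_add,
      Summable.tsum_eq_zero_add hS1, hf1, zero_add]
  rw [htsum]
  have hgeo2 : HasSum (fun n : ℕ => ‖z‖ ^ (n + 2))
      (‖z‖ ^ 2 / (1 - ‖z‖)) := by
    have h := (hasSum_geometric_of_lt_one (norm_nonneg z) hz).mul_left
      (‖z‖ ^ 2)
    have : (fun n : ℕ => ‖z‖ ^ 2 * ‖z‖ ^ n)
        = fun n : ℕ => ‖z‖ ^ (n + 2) := by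
      funext n; rw [pow_add]; ring
    rw [this] at h
    simpa [div_eq_mul_inv] using h
  refine tsum_of_norm_bounded hgeo2 fun n => ?_
  have hfm : f (n + 2) = (-z) ^ (n + 2) * (1 - 1 / ((n + 2)! : ℂ)) := by
    simp only [hf]; ring
  rw [hfm]
  have hfac : (1 : ℝ) ≤ ((n + 2)! : ℝ) := by
    exact_mod_cast Nat.one_le_iff_ne_zero.2 (Nat.factorial_ne_zero _)
  have hcast : (1 : ℂ) - 1 / ((n + 2)! : ℂ) = ((1 - 1 / ((n + 2)! : ℝ) : ℝ) : ℂ) := by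
    push_cast; ring
  calc ‖(-z) ^ (n + 2) * (1 - 1 / ((n + 2)! : ℂ))‖
      = ‖z‖ ^ (n + 2) * ‖(1 : ℂ) - 1 / ((n + 2)! : ℂ)‖ := by
        rw [norm_mul]; simp [norm_pow]
    _ ≤ ‖z‖ ^ (n + 2) * 1 := by
        apply mul_le_mul_of_nonneg_left _ (by positivity)
        rw [hcast, Complex.norm_real, Real.norm_eq_abs, abs_of_nonneg]
        · have : (0 : ℝ) < ((n + 2)! : ℝ) := by linarith
          rw [sub_le_self_iff]
          positivity
        · have : 1 / ((n + 2)! : ℝ) ≤ 1 := by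
            rw [div_le_one (by linarith)]; exact hfac
          linarith
    _ = ‖z‖ ^ (n + 2) := mul_one _
end

section
/- Let n ≥ 1 be an integer, λ ≥ 0, Δt ≥ 0, and let z ∈ ℂ satisfy |z| + λΔt < 1. Then 1 + z − λΔt ≠ 0 and |(1 + z − λΔt)^{−n} − e^{−nz + nλΔt}| ≤ 2n·(1 − |z| − λΔt)^{−(n+1)}·e^{n|z| + nλΔt}·(|z|² + λ²Δt²). -/
/-- For an integer `n ≥ 1`, `λ ≥ 0`, `Δt ≥ 0` and `z ∈ ℂ` with `|z| + λΔt < 1`, we have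
`1 + z − λΔt ≠ 0` and
`|(1 + z − λΔt)^{−n} − e^{−nz + nλΔt}| ≤ 2n (1 − |z| − λΔt)^{−(n+1)} e^{n|z| + nλΔt} (|z|² + λ²Δt²)`. -/
theorem rational_approx_power_bound (n : ℕ) (hn : 1 ≤ n) (lam Δt : ℝ)
    (hlam : 0 ≤ lam) (hΔt : 0 ≤ Δt) (z : ℂ) (hz : ‖z‖ + lam * Δt < 1) :
    1 + z - (lam * Δt : ℝ) ≠ 0 ∧
    ‖(1 + z - (lam * Δt : ℝ)) ^ (-(n : ℤ)) -
        Complex.exp (-(n : ℂ) * z + (n : ℂ) * (lam * Δt : ℝ))‖ ≤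
      2 * n * (1 - ‖z‖ - lam * Δt) ^ (-((n : ℤ) + 1)) *
        Real.exp (n * ‖z‖ + n * (lam * Δt)) *
        (‖z‖ ^ 2 + lam ^ 2 * Δt ^ 2) := by
  set s : ℝ := lam * Δt with hs
  have hs0 : 0 ≤ s := mul_nonneg hlam hΔt
  set w : ℂ := z - (s : ℂ) with hw
  have habsw : ‖w‖ ≤ ‖z‖ + s := by
    calc ‖w‖ ≤ ‖z‖ + ‖(s : ℂ)‖ :=
          by simpa [hw, sub_eq_add_neg] using norm_add_le z (-(s : ℂ))
      _ = ‖z‖ + s := by rw [Complex.norm_real, Real.norm_of_nonneg hs0]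
  have hw1 : ‖w‖ < 1 := lt_of_le_of_lt habsw hz
  set r : ℝ := 1 - ‖z‖ - s with hr
  have hr0 : 0 < r := by simp only [hr]; linarith
  have hr1 : r ≤ 1 := by
    have := norm_nonneg z
    simp only [hr]; linarith
  set a : ℂ := 1 + w with ha
  have ha_lb : r ≤ ‖a‖ := by
    have h1 : (1 : ℝ) ≤ ‖a‖ + ‖w‖ := by
      have h := norm_add_le (1 + w) (-w)
      simpa [ha] using h
    linarith
  have ha0 : a ≠ 0 := by
    intro h
    rw [h] at ha_lb
    simp at ha_lb
    linarith
  have heq1 : (1 : ℂ) + z - (s : ℂ) = a := by rw [ha, hw]; ring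
  constructor
  · rw [heq1]; exact ha0
  set b : ℂ := Complex.exp w with hb
  have hb0 : b ≠ 0 := Complex.exp_ne_zero w
  -- rewrite the exponential
  have hexp : Complex.exp (-(n : ℂ) * z + (n : ℂ) * (s : ℂ)) = b ^ (-(n : ℤ)) := by
    rw [hb, ← Complex.exp_int_mul]
    congr 1
    push_cast [hw]
    ring
  rw [heq1, hexp]
  -- set up bounds
  set E : ℝ := Real.exp (‖z‖ + s) with hE
  have hE1 : (1 : ℝ) ≤ E := Real.one_le_exp (by positivity)
  have hrinv1 : (1 : ℝ) ≤ r⁻¹ := (one_le_inv₀ hr0).mpr hr1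
  have hinv_a : ‖a⁻¹‖ ≤ r⁻¹ := by
    rw [norm_inv]
    exact inv_anti₀ hr0 ha_lb
  have hinv_b : ‖b⁻¹‖ ≤ E := by
    rw [norm_inv, hb, Complex.norm_exp, ← Real.exp_neg]
    apply Real.exp_le_exp.mpr
    have h1 : -w.re ≤ ‖w‖ := by
      have := Complex.abs_re_le_norm w
      rw [abs_le] at this
      linarith [this.1]
    linarith
  -- key identity
  have hkey : a ^ (-(n : ℤ)) - b ^ (-(n : ℤ)) =
      (∑ i ∈ Finset.range n, (a⁻¹) ^ i * (b⁻¹) ^ (n - 1 - i)) * (a⁻¹ - b⁻¹) := by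
    rw [geom_sum₂_mul, zpow_neg, zpow_neg, zpow_natCast, zpow_natCast, inv_pow, inv_pow]
  -- bound on |a⁻¹ - b⁻¹|
  have hdiff : ‖a⁻¹ - b⁻¹‖ ≤ ‖w‖ ^ 2 * (r⁻¹ * E) := by
    have hid : a⁻¹ - b⁻¹ = (b - a) * (a⁻¹ * b⁻¹) := by
      field_simp
    have hba : ‖b - a‖ ≤ ‖w‖ ^ 2 := by
      have : b - a = Complex.exp w - 1 - w := by rw [hb, ha]; ring
      rw [this]
      exact Complex.norm_exp_sub_one_sub_id_le hw1.le
    calc ‖a⁻¹ - b⁻¹‖ = ‖b - a‖ * (‖a⁻¹‖ * ‖b⁻¹‖) := by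
          rw [hid, norm_mul, norm_mul]
      _ ≤ ‖w‖ ^ 2 * (r⁻¹ * E) := by
          apply mul_le_mul hba _ (by positivity) (by positivity)
          exact mul_le_mul hinv_a hinv_b (norm_nonneg _) (by positivity)
  -- bound on the sum
  have hsum : ‖∑ i ∈ Finset.range n, (a⁻¹) ^ i * (b⁻¹) ^ (n - 1 - i)‖ ≤
      n * (r⁻¹ ^ (n - 1) * E ^ (n - 1)) := by
    calc ‖∑ i ∈ Finset.range n, (a⁻¹) ^ i * (b⁻¹) ^ (n - 1 - i)‖
        ≤ ∑ i ∈ Finset.range n, ‖(a⁻¹) ^ i * (b⁻¹) ^ (n - 1 - i)‖ :=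
          norm_sum_le _ _
      _ ≤ ∑ i ∈ Finset.range n, r⁻¹ ^ (n - 1) * E ^ (n - 1) := by
          apply Finset.sum_le_sum
          intro i hi
          rw [norm_mul, norm_pow, norm_pow]
          have h1 : ‖a⁻¹‖ ^ i ≤ r⁻¹ ^ (n - 1) := by
            calc ‖a⁻¹‖ ^ i ≤ r⁻¹ ^ i :=
                  pow_le_pow_left₀ (norm_nonneg _) hinv_a i
              _ ≤ r⁻¹ ^ (n - 1) := by
                  apply pow_le_pow_right₀ hrinv1
                  have := Finset.mem_range.mp hi
                  omega
          have h2 : ‖b⁻¹‖ ^ (n - 1 - i) ≤ E ^ (n - 1) := by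
            calc ‖b⁻¹‖ ^ (n - 1 - i) ≤ E ^ (n - 1 - i) :=
                  pow_le_pow_left₀ (norm_nonneg _) hinv_b _
              _ ≤ E ^ (n - 1) := pow_le_pow_right₀ hE1 (by omega)
          exact mul_le_mul h1 h2 (by positivity) (by positivity)
      _ = n * (r⁻¹ ^ (n - 1) * E ^ (n - 1)) := by
          rw [Finset.sum_const, Finset.card_range, nsmul_eq_mul]
  -- combine
  have hmain : ‖a ^ (-(n : ℤ)) - b ^ (-(n : ℤ))‖ ≤
      n * r⁻¹ ^ n * E ^ n * ‖w‖ ^ 2 := by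
    rw [hkey, norm_mul]
    calc ‖∑ i ∈ Finset.range n, (a⁻¹) ^ i * (b⁻¹) ^ (n - 1 - i)‖ *
          ‖a⁻¹ - b⁻¹‖
        ≤ (n * (r⁻¹ ^ (n - 1) * E ^ (n - 1))) * (‖w‖ ^ 2 * (r⁻¹ * E)) :=
          mul_le_mul hsum hdiff (norm_nonneg _) (by positivity)
      _ = n * (r⁻¹ ^ (n - 1) * r⁻¹) * (E ^ (n - 1) * E) * ‖w‖ ^ 2 := by ring
      _ = n * r⁻¹ ^ n * E ^ n * ‖w‖ ^ 2 := by
          rw [← pow_succ, ← pow_succ, Nat.sub_add_cancel hn]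
  -- final estimate
  have hEn : E ^ n = Real.exp (n * ‖z‖ + n * s) := by
    rw [hE, ← Real.exp_nat_mul]
    ring_nf
  have hrz : r ^ (-((n : ℤ) + 1)) = r⁻¹ ^ (n + 1) := by
    have : -((n : ℤ) + 1) = -((n + 1 : ℕ) : ℤ) := by push_cast; ring
    rw [this, zpow_neg, zpow_natCast, inv_pow]
  have hw2 : ‖w‖ ^ 2 ≤ 2 * (‖z‖ ^ 2 + lam ^ 2 * Δt ^ 2) := by
    have h1 : ‖w‖ ^ 2 ≤ (‖z‖ + s) ^ 2 := by
      apply pow_le_pow_left₀ (norm_nonneg w) habsw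
    have h2 : s ^ 2 = lam ^ 2 * Δt ^ 2 := by rw [hs]; ring
    nlinarith [norm_nonneg z, sq_nonneg (‖z‖ - s)]
  calc ‖a ^ (-(n : ℤ)) - b ^ (-(n : ℤ))‖
      ≤ n * r⁻¹ ^ n * E ^ n * ‖w‖ ^ 2 := hmain
    _ ≤ n * r⁻¹ ^ (n + 1) * E ^ n * (2 * (‖z‖ ^ 2 + lam ^ 2 * Δt ^ 2)) := by
        have hrn : r⁻¹ ^ n ≤ r⁻¹ ^ (n + 1) := pow_le_pow_right₀ hrinv1 (by omega)
        have hEn0 : (0 : ℝ) ≤ E ^ n := by positivity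
        have h1 : n * r⁻¹ ^ n * E ^ n ≤ n * r⁻¹ ^ (n + 1) * E ^ n := by
          apply mul_le_mul_of_nonneg_right _ hEn0
          apply mul_le_mul_of_nonneg_left hrn (by positivity)
        exact mul_le_mul h1 hw2 (by positivity) (by positivity)
    _ = 2 * n * r ^ (-((n : ℤ) + 1)) * Real.exp (n * ‖z‖ + n * s) *
        (‖z‖ ^ 2 + lam ^ 2 * Δt ^ 2) := by
        rw [hrz, hEn]; ring
end
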